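/- The function 𝓔 : [0,1] → ℝ defined by 𝓔(x) = H(1/2 + (1/2)√(1 − x)), where H(y) = −y log₂ y − (1−y) log₂(1−y) is the binary entropy (with 0 log₂ 0 = 0), is monotone nondecreasing and concave on [0,1]. -/

import Mathlib

noncomputable section

/-- Binary entropy H(y) = −y log₂ y − (1−y) log₂ (1−y) (with 0 log₂ 0 = 0, which is
automatic since `Real.logb 2 0 = 0`). -/
def binEnt (y : ℝ) : ℝ := -(y * Real.logb 2 y) - (1 - y) * Real.logb 2 (1 - y)

/-- 𝓔(x) = H(1/2 + (1/2)√(1 − x)). -/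
def Efun (x : ℝ) : ℝ := binEnt (1 / 2 + (1 / 2) * Real.sqrt (1 - x))


lemma binEnt_eq : binEnt = fun y => (-(y * Real.log y) - (1 - y) * Real.log (1 - y)) * (Real.log 2)⁻¹ := by
  funext t
  simp [binEnt, Real.logb, div_eq_mul_inv]
  ring

lemma continuous_binEnt : Continuous binEnt := by
  rw [binEnt_eq]
  exact ((Real.continuous_mul_log.neg.sub
    (Real.continuous_mul_log.comp (continuous_const.sub continuous_id))).mul continuous_const)

lemma key_ineq {s : ℝ} (h0 : 0 < s) (h1 : s < 1) :
    Real.log (1 + s) - Real.log (1 - s) ≤ 2 * s / (1 - s ^ 2) := by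
  have hs1 : (0:ℝ) < 1 - s := by linarith
  have hs2 : (0:ℝ) < 1 + s := by linarith
  set u := (1 + s) / (1 - s) with hu
  have hupos : 0 < u := by positivity
  have hu1 : 1 < u := by rw [hu, lt_div_iff₀ hs1]; linarith
  have hL : Real.log (1 + s) - Real.log (1 - s) = Real.log u := by
    rw [hu, Real.log_div hs2.ne' hs1.ne']
  have hLpos : 0 < Real.log u := Real.log_pos hu1
  have hsinh : Real.log u < Real.sinh (Real.log u) := Real.self_lt_sinh_iff.mpr hLpos
  have hval : Real.sinh (Real.log u) = 2 * s / (1 - s ^ 2) := by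
    have hs3 : (1:ℝ) - s ^ 2 ≠ 0 := by nlinarith
    rw [Real.sinh_eq, Real.exp_log hupos, Real.exp_neg, Real.exp_log hupos, hu, inv_div]
    field_simp [hs3]
    ring
  rw [hL]
  linarith [hval ▸ hsinh]

lemma binEnt_hasDerivAt {y : ℝ} (h0 : 0 < y) (h1 : y < 1) :
    HasDerivAt binEnt ((Real.log (1 - y) - Real.log y) / Real.log 2) y := by
  have h1y : (1:ℝ) - y ≠ 0 := by linarith
  have d1 : HasDerivAt (fun t : ℝ => t * Real.log t) (Real.log y + 1) y :=
    Real.hasDerivAt_mul_log h0.ne'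
  have d2 : HasDerivAt (fun t : ℝ => (1 - t) * Real.log (1 - t)) (-(Real.log (1 - y) + 1)) y := by
    have h := (Real.hasDerivAt_mul_log h1y).comp y ((hasDerivAt_id y).const_sub 1)
    exact h.congr_deriv (by ring)
  have d := (d1.neg.sub d2).mul_const (Real.log 2)⁻¹
  rw [binEnt_eq]
  refine d.congr_deriv ?_
  have hl2 : Real.log 2 ≠ 0 := (Real.log_pos one_lt_two).ne'
  field_simp
  ring

def Dfun (x : ℝ) : ℝ :=
  (Real.log (1 + Real.sqrt (1 - x)) - Real.log (1 - Real.sqrt (1 - x))) /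
    (4 * Real.sqrt (1 - x) * Real.log 2)

lemma sqrt_hasDerivAt {x : ℝ} (hx : x ∈ Set.Ioo (0:ℝ) 1) :
    HasDerivAt (fun x => Real.sqrt (1 - x)) (1 / (2 * Real.sqrt (1 - x)) * (-1)) x := by
  have h1x : (0:ℝ) < 1 - x := by linarith [hx.2]
  exact (Real.hasDerivAt_sqrt h1x.ne').comp x ((hasDerivAt_id x).const_sub 1)

lemma Efun_hasDerivAt {x : ℝ} (hx : x ∈ Set.Ioo (0:ℝ) 1) : HasDerivAt Efun (Dfun x) x := by
  obtain ⟨hx0, hx1⟩ := hx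
  have h1x : (0:ℝ) < 1 - x := by linarith
  set s := Real.sqrt (1 - x) with hs
  have hs0 : 0 < s := Real.sqrt_pos.mpr h1x
  have hsq : s ^ 2 = 1 - x := Real.sq_sqrt h1x.le
  have hs1 : s < 1 := by nlinarith
  have dy : HasDerivAt (fun x => 1 / 2 + 1 / 2 * Real.sqrt (1 - x))
      (1 / 2 * (1 / (2 * s) * (-1))) x :=
    ((sqrt_hasDerivAt ⟨hx0, hx1⟩).const_mul (1/2)).const_add (1/2)
  have hy0 : (0:ℝ) < 1 / 2 + 1 / 2 * s := by linarith
  have hy1 : 1 / 2 + 1 / 2 * s < 1 := by linarith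
  have db := (binEnt_hasDerivAt hy0 hy1).comp x dy
  have heq : Efun = binEnt ∘ (fun x => 1 / 2 + 1 / 2 * Real.sqrt (1 - x)) := rfl
  rw [heq]
  refine db.congr_deriv ?_
  have l1 : Real.log (1 - (1 / 2 + 1 / 2 * s)) = Real.log (1 - s) - Real.log 2 := by
    rw [show (1:ℝ) - (1 / 2 + 1 / 2 * s) = (1 - s) / 2 by ring,
      Real.log_div (by linarith) two_ne_zero]
  have l2 : Real.log (1 / 2 + 1 / 2 * s) = Real.log (1 + s) - Real.log 2 := by
    rw [show (1:ℝ) / 2 + 1 / 2 * s = (1 + s) / 2 by ring,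
      Real.log_div (by linarith) two_ne_zero]
  rw [Dfun, l1, l2]
  have hl2 : Real.log 2 ≠ 0 := (Real.log_pos one_lt_two).ne'
  field_simp
  try ring
  try exact Or.inl trivial

lemma Dfun_deriv_nonpos {x : ℝ} (hx : x ∈ Set.Ioo (0:ℝ) 1) :
    HasDerivAt Dfun (deriv Dfun x) x ∧ deriv Dfun x ≤ 0 := by
  obtain ⟨hx0, hx1⟩ := hx
  have h1x : (0:ℝ) < 1 - x := by linarith
  set s := Real.sqrt (1 - x) with hs
  have hs0 : 0 < s := Real.sqrt_pos.mpr h1x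
  have hsq : s ^ 2 = 1 - x := Real.sq_sqrt h1x.le
  have hs1 : s < 1 := by nlinarith
  have hsp : (0:ℝ) < 1 + s := by linarith
  have hsm : (0:ℝ) < 1 - s := by linarith
  have hl2 : (0:ℝ) < Real.log 2 := Real.log_pos one_lt_two
  set c : ℝ := 1 / (2 * s) * (-1) with hc
  have ds : HasDerivAt (fun x => Real.sqrt (1 - x)) c x := sqrt_hasDerivAt ⟨hx0, hx1⟩
  have dlp : HasDerivAt (fun x => Real.log (1 + Real.sqrt (1 - x))) (c / (1 + s)) x :=
    (ds.const_add 1).log hsp.ne'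
  have dlm : HasDerivAt (fun x => Real.log (1 - Real.sqrt (1 - x))) (-c / (1 - s)) x :=
    (ds.const_sub 1).log hsm.ne'
  have du := dlp.sub dlm
  have dv : HasDerivAt (fun x => 4 * Real.sqrt (1 - x) * Real.log 2) (4 * c * Real.log 2) x :=
    (ds.const_mul 4).mul_const (Real.log 2)
  have hvne : 4 * s * Real.log 2 ≠ 0 := by positivity
  have dd : HasDerivAt Dfun
      (((c / (1 + s) - -c / (1 - s)) * (4 * s * Real.log 2) -
        (Real.log (1 + s) - Real.log (1 - s)) * (4 * c * Real.log 2)) /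
          (4 * s * Real.log 2) ^ 2) x := du.div dv hvne
  rw [dd.deriv]
  refine ⟨dd, ?_⟩
  apply div_nonpos_of_nonpos_of_nonneg _ (by positivity)
  set L := Real.log (1 + s) - Real.log (1 - s) with hL
  have key : L ≤ 2 * s / (1 - s ^ 2) := key_ineq hs0 hs1
  have h2 : (0:ℝ) < 1 - s ^ 2 := by nlinarith
  have hnum : (c / (1 + s) - -c / (1 - s)) * (4 * s * Real.log 2) - L * (4 * c * Real.log 2)
      = (2 * Real.log 2 / (s * (1 - s ^ 2))) * (L * (1 - s ^ 2) - 2 * s) := by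
    rw [hc]
    field_simp
    ring
  rw [hnum]
  apply mul_nonpos_of_nonneg_of_nonpos (by positivity)
  rw [sub_nonpos]
  calc L * (1 - s ^ 2) ≤ (2 * s / (1 - s ^ 2)) * (1 - s ^ 2) :=
        mul_le_mul_of_nonneg_right key h2.le
    _ = 2 * s := by field_simp

/-- The function 𝓔(x) = H(1/2 + (1/2)√(1 − x)) is monotone nondecreasing and concave
on [0,1]. -/
theorem Efun_monotone_concave :
    MonotoneOn Efun (Set.Icc (0 : ℝ) 1) ∧ ConcaveOn ℝ (Set.Icc (0 : ℝ) 1) Efun := by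
  have contE : ContinuousOn Efun (Set.Icc (0:ℝ) 1) := by
    apply Continuous.continuousOn
    exact continuous_binEnt.comp (by continuity)
  have diffE : DifferentiableOn ℝ Efun (interior (Set.Icc (0:ℝ) 1)) := by
    rw [interior_Icc]
    exact fun x hx => (Efun_hasDerivAt hx).differentiableAt.differentiableWithinAt
  have derivEq : ∀ x ∈ Set.Ioo (0:ℝ) 1, deriv Efun x = Dfun x :=
    fun x hx => (Efun_hasDerivAt hx).deriv
  have hDnonneg : ∀ x ∈ Set.Ioo (0:ℝ) 1, 0 ≤ Dfun x := by
    intro x hx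
    obtain ⟨hx0, hx1⟩ := hx
    have h1x : (0:ℝ) < 1 - x := by linarith
    set s := Real.sqrt (1 - x) with hs
    have hs0 : 0 < s := Real.sqrt_pos.mpr h1x
    have hsq : s ^ 2 = 1 - x := Real.sq_sqrt h1x.le
    have hs1 : s < 1 := by nlinarith
    have hl2 : (0:ℝ) < Real.log 2 := Real.log_pos one_lt_two
    apply div_nonneg _ (by positivity)
    have hlog := Real.log_le_log (by linarith : (0:ℝ) < 1 - s)
      (by linarith : (1:ℝ) - s ≤ 1 + s)
    linarith
  have hAnti : AntitoneOn Dfun (Set.Ioo (0:ℝ) 1) := by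
    apply antitoneOn_of_deriv_nonpos (convex_Ioo 0 1)
    · exact fun x hx => (Dfun_deriv_nonpos hx).1.continuousAt.continuousWithinAt
    · rw [interior_Ioo]
      exact fun x hx => (Dfun_deriv_nonpos hx).1.differentiableAt.differentiableWithinAt
    · intro x hx
      rw [interior_Ioo] at hx
      exact (Dfun_deriv_nonpos hx).2
  constructor
  · apply monotoneOn_of_deriv_nonneg (convex_Icc 0 1) contE diffE
    intro x hx
    rw [interior_Icc] at hx
    rw [derivEq x hx]
    exact hDnonneg x hx
  · apply AntitoneOn.concaveOn_of_deriv (convex_Icc 0 1) contE diffE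
    rw [interior_Icc]
    intro a ha b hb hab
    rw [derivEq a ha, derivEq b hb]
    exact hAnti ha hb hab
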